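/- Let G be a group and let ḡ, ḡ', ḡ'' be tuples of elements of G with πḡ' = 1. Let H_1 = ⟨ḡ entries together with ḡ'' entries⟩, H_2 = ⟨ḡ'⟩, and H = ⟨H_1, H_2⟩. Assume every element h ∈ H factors as h = h_1 h_2 with h_1 ∈ H_1 and h_2 ∈ H_2. Then for every h ∈ H, the concatenations ḡ·ḡ'·ḡ'' and ḡ·(ḡ')^h·ḡ'' are braid-equivalent. -/

import Mathlib

/-- One Hurwitz braid move: replace adjacent entries `a, b` by `a*b*a⁻¹, a`. -/
inductive BraidMove (G : Type*) [Group G] : List G → List G → Prop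
  | mk (l₁ l₂ : List G) (a b : G) :
      BraidMove G (l₁ ++ a :: b :: l₂) (l₁ ++ (a * b * a⁻¹) :: a :: l₂)

/-- Braid equivalence of tuples: the equivalence relation generated by Hurwitz moves. -/
def BraidEquiv (G : Type*) [Group G] : List G → List G → Prop :=
  Relation.EqvGen (BraidMove G)

/-- Componentwise conjugation of a tuple: `ḡ^h = (h g₁ h⁻¹, …, h gₙ h⁻¹)`. -/
def conjList {G : Type*} [Group G] (h : G) (l : List G) : List G :=
  l.map fun x => h * x * h⁻¹

namespace BraidAux

variable {G : Type*} [Group G]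

@[simp] lemma conjList_nil (c : G) : conjList c ([] : List G) = [] := rfl

@[simp] lemma conjList_cons (c a : G) (l : List G) :
    conjList c (a :: l) = (c * a * c⁻¹) :: conjList c l := rfl

@[simp] lemma conjList_append (c : G) (l l' : List G) :
    conjList c (l ++ l') = conjList c l ++ conjList c l' := List.map_append

@[simp] lemma conjList_conjList (c d : G) (l : List G) :
    conjList c (conjList d l) = conjList (c * d) l := by
  induction l with
  | nil => rfl
  | cons a t ih => simp [ih, mul_assoc]

@[simp] lemma conjList_one (l : List G) : conjList (1 : G) l = l := by
  induction l with
  | nil => rfl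
  | cons a t ih => simp [ih]

@[simp] lemma conjList_prod (c : G) (l : List G) :
    (conjList c l).prod = c * l.prod * c⁻¹ := by
  induction l with
  | nil => simp
  | cons a t ih => simp [ih, mul_assoc]

lemma beRefl (l : List G) : BraidEquiv G l l := Relation.EqvGen.refl l

lemma beSymm {l l' : List G} (h : BraidEquiv G l l') : BraidEquiv G l' l :=
  Relation.EqvGen.symm _ _ h

lemma beTrans {l l' l'' : List G} (h : BraidEquiv G l l')
    (h' : BraidEquiv G l' l'') : BraidEquiv G l l'' :=
  Relation.EqvGen.trans _ _ _ h h'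

/-- Embedding a braid equivalence in a context. -/
lemma beAppend {l l' : List G} (p s : List G) (h : BraidEquiv G l l') :
    BraidEquiv G (p ++ l ++ s) (p ++ l' ++ s) := by
  induction h with
  | rel x y hxy =>
    cases hxy with
    | mk l₁ l₂ a b =>
      apply Relation.EqvGen.rel
      have := BraidMove.mk (G := G) (p ++ l₁) (l₂ ++ s) a b
      simpa using this
  | refl x => exact Relation.EqvGen.refl _
  | symm x y _ ih => exact Relation.EqvGen.symm _ _ ih
  | trans x y z _ _ ih₁ ih₂ => exact Relation.EqvGen.trans _ _ _ ih₁ ih₂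

/-- Flexible version of `beAppend`. -/
lemma beCongr {l l' L L' : List G} (p s : List G)
    (h : BraidEquiv G l l') (hL : L = p ++ l ++ s) (hL' : L' = p ++ l' ++ s) :
    BraidEquiv G L L' := hL ▸ hL' ▸ beAppend p s h

/-- Braid equivalence is invariant under global conjugation. -/
lemma beConj (c : G) {l l' : List G} (h : BraidEquiv G l l') :
    BraidEquiv G (conjList c l) (conjList c l') := by
  induction h with
  | rel x y hxy =>
    cases hxy with
    | mk l₁ l₂ a b =>
      apply Relation.EqvGen.rel
      show BraidMove G (conjList c (l₁ ++ a :: b :: l₂))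
        (conjList c (l₁ ++ (a * b * a⁻¹) :: a :: l₂))
      have e : c * (a * b * a⁻¹) * c⁻¹ =
          (c * a * c⁻¹) * (c * b * c⁻¹) * (c * a * c⁻¹)⁻¹ := by group
      simp only [conjList_append, conjList_cons, e]
      exact BraidMove.mk _ _ _ _
  | refl x => exact Relation.EqvGen.refl _
  | symm x y _ ih => exact Relation.EqvGen.symm _ _ ih
  | trans x y z _ _ ih₁ ih₂ => exact Relation.EqvGen.trans _ _ _ ih₁ ih₂

/-- Sweeping an element rightwards through a block conjugates the block. -/
lemma sweep (a : G) (l : List G) : BraidEquiv G (a :: l) (conjList a l ++ [a]) := by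
  induction l with
  | nil => exact Relation.EqvGen.refl _
  | cons b t ih =>
    refine beTrans (l' := (a * b * a⁻¹) :: a :: t)
      (Relation.EqvGen.rel _ _ (BraidMove.mk [] t a b)) ?_
    have := beAppend (G := G) [a * b * a⁻¹] [] ih
    simpa using this

/-- Sweeping a block past an element on its right conjugates that element by
the product of the block. -/
lemma blocksweep (a : G) (l : List G) :
    BraidEquiv G (l ++ [a]) ((l.prod * a * l.prod⁻¹) :: l) := by
  induction l with
  | nil => simpa using beRefl (G := G) [a]
  | cons b t ih =>
    refine beTrans (l' := b :: (t.prod * a * t.prod⁻¹) :: t) ?_ ?_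
    · have := beAppend (G := G) [b] [] ih
      simpa using this
    · have := Relation.EqvGen.rel _ _ (BraidMove.mk [] t b (t.prod * a * t.prod⁻¹))
      have e : b * (t.prod * a * t.prod⁻¹) * b⁻¹ =
          (b :: t).prod * a * ((b :: t).prod)⁻¹ := by
        simp [mul_assoc]
      rw [e] at this
      simpa [BraidEquiv] using this

/-- A product-one block can be swept past an element on its right unchanged. -/
lemma blocksweep_one (a : G) {l : List G} (hl : l.prod = 1) :
    BraidEquiv G (l ++ [a]) (a :: l) := by
  have := blocksweep a l
  simpa [hl] using this

/-- If `a` commutes with the product of `m`, the block `m` adjacent to `a`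
on the left may be conjugated by `a`. -/
lemma cons_conj (a : G) {m : List G} (hm : a * m.prod = m.prod * a) :
    BraidEquiv G (a :: m) (a :: conjList a m) := by
  refine beTrans (sweep a m) ?_
  have hb := blocksweep a (conjList a m)
  have e : (conjList a m).prod * a * ((conjList a m).prod)⁻¹ = a := by
    simp only [conjList_prod]
    calc a * m.prod * a⁻¹ * a * (a * m.prod * a⁻¹)⁻¹
        = a * (m.prod * a * m.prod⁻¹) * a⁻¹ := by group
      _ = a := by rw [← hm]; group
  rw [e] at hb
  exact hb

/-- Rotation: a product-one tuple may be split anywhere and the parts swapped. -/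
lemma rot_append : ∀ (p t : List G), (p ++ t).prod = 1 →
    BraidEquiv G (p ++ t) (t ++ p)
  | [], t, _ => by simpa using beRefl t
  | a :: p, t, h => by
    have hpt : (p ++ t).prod = a⁻¹ := by
      have h0 : a * (p ++ t).prod = 1 := by simpa using h
      rw [← inv_eq_of_mul_eq_one_right h0]
    have s1 : BraidEquiv G ((p ++ t) ++ [a]) (a :: (p ++ t)) := by
      have := blocksweep a (p ++ t)
      rw [hpt] at this
      simpa using this
    have h2 : (p ++ (t ++ [a])).prod = 1 := by
      have hpt' : p.prod * t.prod = a⁻¹ := by simpa using hpt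
      simp [← mul_assoc, hpt']
    have s2 := rot_append p (t ++ [a]) h2
    show BraidEquiv G (a :: (p ++ t)) (t ++ a :: p)
    have step1 : BraidEquiv G (a :: (p ++ t)) (p ++ (t ++ [a])) := by
      refine beCongr [] [] (beSymm s1) ?_ ?_ <;> simp
    have step2 : BraidEquiv G (p ++ (t ++ [a])) (t ++ a :: p) := by
      refine beCongr [] [] s2 ?_ ?_ <;> simp
    exact beTrans step1 step2

/-- A product-one block is braid equivalent to its conjugate by any element
of the subgroup generated by its entries. -/
lemma conj_self {l : List G} (hl : l.prod = 1) {x : G}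
    (hx : x ∈ Subgroup.closure {y | y ∈ l}) :
    BraidEquiv G l (conjList x l) := by
  induction hx using Subgroup.closure_induction with
  | mem b hb =>
    obtain ⟨p, q, rfl⟩ := List.append_of_mem hb
    have hq : (q ++ p).prod = b⁻¹ := by
      have h0 : p.prod * b * q.prod = 1 := by
        simpa [mul_assoc] using hl
      have h1 : (p.prod * b)⁻¹ = q.prod := inv_eq_of_mul_eq_one_right h0
      rw [List.prod_append, ← h1]
      group
    have r1 : BraidEquiv G (p ++ b :: q) (b :: (q ++ p)) := by
      have := rot_append p (b :: q) hl
      refine beCongr [] [] this ?_ ?_ <;> simp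
    have hcomm : b * (q ++ p).prod = (q ++ p).prod * b := by rw [hq]; group
    have r2 := cons_conj b hcomm
    have r3 : BraidEquiv G (conjList b ((b :: q) ++ p)) (conjList b (p ++ b :: q)) :=
      beConj b (beSymm (rot_append p (b :: q) hl))
    refine beTrans r1 (beTrans r2 ?_)
    refine beCongr [] [] r3 ?_ ?_ <;> simp
  | one => simpa using beRefl l
  | mul x y hx hy ihx ihy =>
    have := beTrans ihx (beConj x ihy)
    simpa using this
  | inv x hx ih =>
    have := beConj x⁻¹ (beSymm ih)
    simpa using this

end BraidAux

open BraidAux in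
/-- conjugating a middle block of product 1 by elements of
, provided , preserves the braid-equivalence class. -/
theorem braidEquiv_conj_middle_block {G : Type*} [Group G] (g g' g'' : List G)
    (hprod : g'.prod = 1)
    (H₁ : Subgroup G) (hH₁ : H₁ = Subgroup.closure ({x | x ∈ g} ∪ {x | x ∈ g''}))
    (H₂ : Subgroup G) (hH₂ : H₂ = Subgroup.closure {x | x ∈ g'})
    (H : Subgroup G) (hH : H = H₁ ⊔ H₂)
    (hfact : ∀ h ∈ H, ∃ h₁ ∈ H₁, ∃ h₂ ∈ H₂, h = h₁ * h₂) :
    ∀ h ∈ H, BraidEquiv G (g ++ g' ++ g'') (g ++ conjList h g' ++ g'') := by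
  -- Step B: conjugation of an arbitrary product-one middle block by elements of H₁.
  have stepB : ∀ x ∈ H₁, ∀ m : List G, m.prod = 1 →
      BraidEquiv G (g ++ m ++ g'') (g ++ conjList x m ++ g'') := by
    rw [hH₁]
    intro x hx
    induction hx using Subgroup.closure_induction with
    | mem b hb =>
      intro m hm
      rcases hb with hb | hb
      · -- b is an entry of g
        obtain ⟨p, q, rfl⟩ := List.append_of_mem hb
        have s1 : BraidEquiv G ((p ++ b :: q) ++ m ++ g'')
            (p ++ (conjList b q ++ (conjList b m ++ [b])) ++ g'') := by
          refine beCongr p g'' (sweep b (q ++ m)) ?_ ?_ <;> simp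
        have s2 : BraidEquiv G (p ++ (conjList b q ++ (conjList b m ++ [b])) ++ g'')
            (p ++ (conjList b q ++ (b :: conjList b m)) ++ g'') := by
          have hb1 : (conjList b m).prod = 1 := by simp [hm]
          refine beCongr (p ++ conjList b q) g''
            (blocksweep_one b hb1) ?_ ?_ <;> simp
        have s3 : BraidEquiv G (p ++ (conjList b q ++ (b :: conjList b m)) ++ g'')
            ((p ++ b :: q) ++ conjList b m ++ g'') := by
          have h3 : BraidEquiv G (conjList b q ++ [b]) (b :: q) := beSymm (sweep b q)
          refine beCongr p (conjList b m ++ g'') h3 ?_ ?_ <;> simp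
        exact beTrans s1 (beTrans s2 s3)
      · -- b is an entry of g''
        obtain ⟨p, q, rfl⟩ := List.append_of_mem hb
        have h1 : BraidEquiv G (b :: conjList b⁻¹ p) (p ++ [b]) := by
          have := sweep b (conjList b⁻¹ p)
          simpa using this
        have s1 : BraidEquiv G (g ++ m ++ (p ++ b :: q))
            (g ++ ((m ++ [b]) ++ (conjList b⁻¹ p ++ q))) := by
          refine beCongr (g ++ m) q (beSymm h1) ?_ ?_ <;> simp
        have s2 : BraidEquiv G (g ++ ((m ++ [b]) ++ (conjList b⁻¹ p ++ q)))
            (g ++ ((b :: m) ++ (conjList b⁻¹ p ++ q))) := by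
          refine beCongr g (conjList b⁻¹ p ++ q)
            (blocksweep_one b hm) ?_ ?_ <;> simp
        have s3 : BraidEquiv G (g ++ ((b :: m) ++ (conjList b⁻¹ p ++ q)))
            (g ++ ((b :: conjList b m) ++ (conjList b⁻¹ p ++ q))) := by
          refine beCongr g (conjList b⁻¹ p ++ q)
            (cons_conj b (by rw [hm]; group)) ?_ ?_ <;> simp
        have s4 : BraidEquiv G (g ++ ((b :: conjList b m) ++ (conjList b⁻¹ p ++ q)))
            (g ++ ((conjList b m ++ [b]) ++ (conjList b⁻¹ p ++ q))) := by
          have hb1 : (conjList b m).prod = 1 := by simp [hm]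
          refine beCongr g (conjList b⁻¹ p ++ q)
            (beSymm (blocksweep_one b hb1)) ?_ ?_ <;> simp
        have s5 : BraidEquiv G (g ++ ((conjList b m ++ [b]) ++ (conjList b⁻¹ p ++ q)))
            (g ++ conjList b m ++ (p ++ b :: q)) := by
          refine beCongr (g ++ conjList b m) q h1 ?_ ?_ <;> simp
        exact beTrans s1 (beTrans s2 (beTrans s3 (beTrans s4 s5)))
    | one => intro m hm; simpa using beRefl (g ++ m ++ g'')
    | mul x y hx hy ihx ihy =>
      intro m hm
      have hy1 : (conjList y m).prod = 1 := by simp [hm]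
      have := beTrans (ihy m hm) (ihx (conjList y m) hy1)
      simpa using this
    | inv x hx ih =>
      intro m hm
      have hx1 : (conjList x⁻¹ m).prod = 1 := by simp [hm]
      have := beSymm (ih (conjList x⁻¹ m) hx1)
      simpa using this
  intro h hh
  obtain ⟨h₁, hh₁, h₂, hh₂, rfl⟩ := hfact h hh
  have hA : BraidEquiv G (g ++ g' ++ g'') (g ++ conjList h₂ g' ++ g'') :=
    beAppend g g'' (conj_self hprod (hH₂ ▸ hh₂))
  have hB := stepB h₁ hh₁ (conjList h₂ g') (by simp [hprod])
  have := beTrans hA hB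
  simpa using this
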